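/- For every n ∈ ℕ, the n-th coefficient of the partition function of zero-dimensional φ⁴-theory, F[−X²/2 + X⁴/4!], equals (4n−1)!!/((4!)ⁿ n!); explicitly, Σ_{k=0}^{2n} ((2(n+k)−1)!!/k!) · [X^{2(n+k)}]((X⁴/24)^k) = (4n−1)!!/(24ⁿ n!). -/

import Mathlib

/-- `dfac m` is the odd double factorial `(2m-1)!! = (2m)!/(2^m m!)` as a real number. -/
noncomputable def dfac (m : ℕ) : ℝ := ((2 * m).factorial : ℝ) / (2 ^ m * (m.factorial : ℝ))

/-- The `n`-th coefficient of the partition function of zero-dimensional φ⁴-theory,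
`F[-X²/2 + X⁴/4!]`, equals `(4n-1)!!/((4!)^n n!)`; here `(4n-1)!!` is written
as `(4n)!/(2^{2n}(2n)!)`. -/
theorem stmt7 (n : ℕ) :
    ∑ k ∈ Finset.range (2 * n + 1),
        dfac (n + k) / (k.factorial : ℝ) *
          PowerSeries.coeff (R := ℝ) (2 * (n + k))
            ((PowerSeries.C (R := ℝ) (1 / 24) * PowerSeries.X ^ 4) ^ k)
      = ((4 * n).factorial : ℝ) / (2 ^ (2 * n) * ((2 * n).factorial : ℝ)) /
          (24 ^ n * (n.factorial : ℝ)) := by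
  have key : ∀ k, (PowerSeries.coeff (R := ℝ) (2 * (n + k))
      ((PowerSeries.C (R := ℝ) (1 / 24) * PowerSeries.X ^ 4) ^ k) : ℝ)
      = if k = n then (1 / 24 : ℝ) ^ n else 0 := by
    intro k
    rw [mul_pow, ← pow_mul, ← map_pow, PowerSeries.coeff_C_mul, PowerSeries.coeff_X_pow]
    by_cases h : k = n
    · subst h
      have : 2 * (k + k) = 4 * k := by ring
      simp [this]
    · have : 2 * (n + k) ≠ 4 * k := by omega
      simp [this, h]
  rw [Finset.sum_congr rfl (fun k _ => by rw [key k]),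
    Finset.sum_eq_single n (by intro b _ hb; simp [hb]) (fun h => absurd (Finset.mem_range.mpr (by omega)) h)]
  simp only [if_pos rfl]
  rw [dfac, show 2 * (n + n) = 4 * n from by ring, div_pow, one_pow]
  have hn : (n.factorial : ℝ) ≠ 0 := Nat.cast_ne_zero.mpr n.factorial_ne_zero
  have h2n : ((2*n).factorial : ℝ) ≠ 0 := Nat.cast_ne_zero.mpr (2*n).factorial_ne_zero
  field_simp
  rw [if_pos trivial, mul_one_div_cancel (pow_ne_zero _ (by norm_num)), one_mul, ← two_mul]
  try ring
  try exact Or.inl trivial
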